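/- Let T ∈ (0, +∞) and let F : [0, T) → (0, +∞) be continuous with lim_{t→T} F(t) = +∞. Then there exists a sequence (t_k) with t_k → T such that (∫₀^{t_k} F(τ) dτ) / F(t_k) → 0 as k → ∞. -/

import Mathlib

open Filter

private lemma stmt0_key (T : ℝ) (hT : 0 < T) (F : ℝ → ℝ)
    (hcont : ContinuousOn F (Set.Ico 0 T))
    (hpos : ∀ t ∈ Set.Ico (0:ℝ) T, 0 < F t)
    (hlim : Tendsto F (nhdsWithin T (Set.Iio T)) atTop)
    (ε : ℝ) (hε : 0 < ε) (s : ℝ) (hs : s ∈ Set.Ico 0 T) :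
    ∃ t ∈ Set.Ico s T, (∫ τ in (0:ℝ)..t, F τ) < ε * F t := by
  set G : ℝ → ℝ := fun t => ∫ τ in (0:ℝ)..t, F τ with hG
  set s₀ : ℝ := (s + T) / 2 with hs₀def
  have hs₀pos : 0 < s₀ := by
    rw [hs₀def]; have := hs.1; linarith
  have hs₀lt : s₀ < T := by rw [hs₀def]; have := hs.2; linarith
  have hss₀ : s ≤ s₀ := by rw [hs₀def]; have := hs.2; linarith
  have hInt : ∀ t ∈ Set.Ico (0:ℝ) T, IntervalIntegrable F MeasureTheory.volume 0 t := by
    intro t ht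
    apply (hcont.mono ?_).intervalIntegrable
    rw [Set.uIcc_of_le ht.1]
    exact fun x hx => ⟨hx.1, lt_of_le_of_lt hx.2 ht.2⟩
  have hderiv : ∀ t ∈ Set.Ioo (0:ℝ) T, HasDerivAt G (F t) t := by
    intro t ht
    apply intervalIntegral.integral_hasDerivAt_right
      (hInt t ⟨le_of_lt ht.1, ht.2⟩)
    · exact (hcont.mono (fun x hx => ⟨le_of_lt hx.1, hx.2⟩)).stronglyMeasurableAtFilter
        isOpen_Ioo t ht
    · exact (hcont.mono (fun x hx => ⟨le_of_lt hx.1, hx.2⟩)).continuousAt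
        (isOpen_Ioo.mem_nhds ht)
  by_contra hcon
  push_neg at hcon
  have hcon' : ∀ t ∈ Set.Ico s₀ T, ε * F t ≤ G t := by
    intro t ht
    exact hcon t ⟨le_trans hss₀ ht.1, ht.2⟩
  -- Gronwall: ψ u = G u * exp(-u/ε) is antitone on [s₀, T)
  set ψ : ℝ → ℝ := fun u => G u * Real.exp (-u / ε) with hψdef
  have hψderiv : ∀ x ∈ Set.Ioo s₀ T, HasDerivAt ψ
      (F x * Real.exp (-x / ε) + G x * (Real.exp (-x / ε) * (-1 / ε))) x := by
    intro x hx
    have h1 : HasDerivAt (fun u : ℝ => -u / ε) (-1 / ε) x :=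
      (hasDerivAt_id x).neg.div_const ε
    exact (hderiv x ⟨lt_of_lt_of_le hs₀pos (le_of_lt hx.1), hx.2⟩).mul h1.exp
  have hψanti : AntitoneOn ψ (Set.Ico s₀ T) := by
    apply antitoneOn_of_deriv_nonpos (convex_Ico s₀ T)
    · intro x hx
      have hx' : x ∈ Set.Ioo (0:ℝ) T := ⟨lt_of_lt_of_le hs₀pos hx.1, hx.2⟩
      have hGc : ContinuousAt G x := (hderiv x hx').continuousAt
      exact (hGc.mul ((Real.continuous_exp.comp
        ((continuous_id.neg).div_const ε)).continuousAt)).continuousWithinAt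
    · rw [interior_Ico]
      intro x hx
      exact (hψderiv x hx).differentiableAt.differentiableWithinAt
    · rw [interior_Ico]
      intro x hx
      rw [(hψderiv x hx).deriv]
      have he : 0 < Real.exp (-x / ε) := Real.exp_pos _
      have hFx : 0 < F x := hpos x ⟨le_of_lt (lt_of_lt_of_le hs₀pos (le_of_lt hx.1)), hx.2⟩
      have hc : ε * F x ≤ G x := hcon' x ⟨le_of_lt hx.1, hx.2⟩
      have : F x * Real.exp (-x / ε) + G x * (Real.exp (-x / ε) * (-1 / ε)) =
          Real.exp (-x / ε) * (F x - G x / ε) := by field_simp; ring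
      rw [this]
      apply mul_nonpos_of_nonneg_of_nonpos (le_of_lt he)
      have : F x ≤ G x / ε := (le_div_iff₀ hε).2 (by linarith [mul_comm ε (F x)])
      linarith
  -- hence G is bounded by B on [s₀, T)
  set B : ℝ := G s₀ * Real.exp ((T - s₀) / ε) with hBdef
  have hbound : ∀ t ∈ Set.Ico s₀ T, F t ≤ B / ε := by
    intro t ht
    have h1 : ψ t ≤ ψ s₀ := hψanti (Set.left_mem_Ico.2 hs₀lt) ht ht.1
    have hGs₀pos : 0 < G s₀ := by
      apply intervalIntegral.intervalIntegral_pos_of_pos_on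
        (hInt s₀ ⟨le_of_lt hs₀pos, hs₀lt⟩)
      · intro x hx
        exact hpos x ⟨le_of_lt hx.1, lt_trans hx.2 hs₀lt⟩
      · exact hs₀pos
    have hGt : G t ≤ B := by
      have he : 0 < Real.exp (-t / ε) := Real.exp_pos _
      have h2 : G t ≤ G s₀ * Real.exp (-s₀ / ε) * Real.exp (t / ε) := by
        have := mul_le_mul_of_nonneg_right h1 (le_of_lt (Real.exp_pos (t / ε)))
        calc G t = G t * Real.exp (-t / ε) * Real.exp (t / ε) := by
              rw [mul_assoc, ← Real.exp_add, neg_div, neg_add_cancel, Real.exp_zero, mul_one]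
          _ ≤ G s₀ * Real.exp (-s₀ / ε) * Real.exp (t / ε) := this
      calc G t ≤ G s₀ * Real.exp (-s₀ / ε) * Real.exp (t / ε) := h2
        _ = G s₀ * Real.exp ((t - s₀) / ε) := by
            rw [mul_assoc, ← Real.exp_add]; ring_nf
        _ ≤ B := by
            rw [hBdef]
            apply mul_le_mul_of_nonneg_left _ (le_of_lt hGs₀pos)
            apply Real.exp_le_exp.2
            gcongr
            linarith [ht.2]
    have := hcon' t ht
    rw [le_div_iff₀ hε]
    nlinarith
  -- contradiction with F → ∞
  have hev1 : ∀ᶠ x in nhdsWithin T (Set.Iio T), B / ε < F x :=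
    hlim.eventually (eventually_gt_atTop (B / ε))
  have hev2 : ∀ᶠ x in nhdsWithin T (Set.Iio T), x ∈ Set.Ioo s₀ T :=
    Ioo_mem_nhdsLT hs₀lt
  obtain ⟨x, hx1, hx2⟩ := (hev1.and hev2).exists
  exact absurd (hbound x ⟨le_of_lt hx2.1, hx2.2⟩) (not_le.2 hx1)

/-- Let `T ∈ (0,∞)` and `F : [0,T) → (0,∞)` continuous with
`F(t) → ∞` as `t → T`. Then there is a sequence `t_k → T` with
`(∫₀^{t_k} F) / F(t_k) → 0`. -/
theorem stmt0 (T : ℝ) (hT : 0 < T) (F : ℝ → ℝ)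
    (hcont : ContinuousOn F (Set.Ico 0 T))
    (hpos : ∀ t ∈ Set.Ico (0:ℝ) T, 0 < F t)
    (hlim : Tendsto F (nhdsWithin T (Set.Iio T)) atTop) :
    ∃ t : ℕ → ℝ, (∀ k, t k ∈ Set.Ico (0:ℝ) T) ∧
      Tendsto t atTop (nhds T) ∧
      Tendsto (fun k => (∫ τ in (0:ℝ)..(t k), F τ) / F (t k)) atTop (nhds 0) := by
  have key : ∀ k : ℕ, ∃ t ∈ Set.Ico (max 0 (T - 1 / (k + 1))) T,
      (∫ τ in (0:ℝ)..t, F τ) < (1 / (k + 1)) * F t := by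
    intro k
    apply stmt0_key T hT F hcont hpos hlim
    · positivity
    · constructor
      · exact le_max_left _ _
      · apply max_lt hT
        have : (0:ℝ) < 1 / (k + 1) := by positivity
        linarith
  choose t ht hratio using key
  have htmem : ∀ k, t k ∈ Set.Ico (0:ℝ) T := by
    intro k
    exact ⟨le_trans (le_max_left _ _) (ht k).1, (ht k).2⟩
  refine ⟨t, htmem, ?_, ?_⟩
  · have hlow : Tendsto (fun k : ℕ => T - 1 / ((k:ℝ) + 1)) atTop (nhds T) := by
      have := tendsto_one_div_add_atTop_nhds_zero_nat (𝕜 := ℝ)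
      have h2 := (tendsto_const_nhds (x := T) (f := atTop (α := ℕ))).sub this
      simpa using h2
    apply tendsto_of_tendsto_of_tendsto_of_le_of_le hlow tendsto_const_nhds
    · intro k
      exact le_trans (le_max_right _ _) (ht k).1
    · intro k
      exact le_of_lt (ht k).2
  · apply squeeze_zero
    · intro k
      apply div_nonneg _ (le_of_lt (hpos _ (htmem k)))
      apply intervalIntegral.integral_nonneg (htmem k).1
      intro u hu
      exact le_of_lt (hpos u ⟨hu.1, lt_of_le_of_lt hu.2 (htmem k).2⟩)
    · intro k
      have hF : 0 < F (t k) := hpos _ (htmem k)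
      rw [div_le_iff₀ hF]
      have := hratio k
      linarith [mul_comm ((1:ℝ) / (k + 1)) (F (t k))]
    · exact tendsto_one_div_add_atTop_nhds_zero_nat
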